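/- For every t ∈ (0,1] the set L_t := f_u⁻¹(t) ∩ cl_{S_u}(f_u⁻¹([0,t))) is connected, and for every t ∈ [0,1) the set R_t := f_u⁻¹(t) ∩ cl_{S_u}(f_u⁻¹((t,1])) is connected. -/

import Mathlib

open Set Topology

noncomputable section

/-- A set is an `Fσ` set if it is a countable union of closed sets. -/
def IsFSigma {X : Type*} [TopologicalSpace X] (s : Set X) : Prop :=
  ∃ F : ℕ → Set X, (∀ n, IsClosed (F n)) ∧ s = ⋃ n, F n

/-- A topological space is an `F`-space if any two disjoint open `Fσ` subsets
have disjoint closures. -/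
def IsFSpace (X : Type*) [TopologicalSpace X] : Prop :=
  ∀ s t : Set X, IsOpen s → IsOpen t → IsFSigma s → IsFSigma t → Disjoint s t →
    Disjoint (closure s) (closure t)

/-- `𝐒 = ℕ × [0,1]²` where `ℕ` is discrete and `[0,1]` is the unit interval. -/
abbrev bS : Type := ℕ × (unitInterval × unitInterval)

/-- `βπ : β𝐒 → βℕ`, the Stone–Čech extension of the projection `π(n,x,y) = n`. -/
def betaPi : StoneCech bS → StoneCech ℕ :=
  stoneCechExtend (continuous_stoneCechUnit.comp continuous_fst)

/-- `βf : β𝐒 → [0,1]`, the Stone–Čech extension of `f(n,x,y) = x`. -/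
def betaF : StoneCech bS → unitInterval :=
  stoneCechExtend (continuous_fst.comp continuous_snd)

/-- `S_u = βπ⁻¹(u)`, as a subset of `β𝐒` (carrying the subspace topology). -/
def Su (u : StoneCech ℕ) : Set (StoneCech bS) := betaPi ⁻¹' {u}

/-- `f_u : S_u → [0,1]`, the restriction of `βf` to `S_u`. -/
def fu (u : StoneCech ℕ) : (Su u) → unitInterval := fun z => betaF z.1

/-- `L_t = f_u⁻¹(t) ∩ cl_{S_u} f_u⁻¹([0,t))`. -/
def Lset (u : StoneCech ℕ) (t : unitInterval) : Set (Su u) :=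
  fu u ⁻¹' {t} ∩ closure (fu u ⁻¹' (Set.Ico 0 t))

/-- `R_t = f_u⁻¹(t) ∩ cl_{S_u} f_u⁻¹((t,1])`. -/
def Rset (u : StoneCech ℕ) (t : unitInterval) : Set (Su u) :=
  fu u ⁻¹' {t} ∩ closure (fu u ⁻¹' (Set.Ioc t 1))

/-- The rectangle `P_{s,r} = S_u ∩ cl_{β𝐒}(ℕ × [s,r] × I)`, viewed as a subset of `S_u`. -/
def Pset (u : StoneCech ℕ) (s r : unitInterval) : Set (Su u) :=
  Subtype.val ⁻¹' closure (stoneCechUnit '' {p : bS | p.2.1 ∈ Set.Icc s r})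

/-- `L_{s,t} = cl_{S_u}(⋃_{s<r<t} P_{s,r})`. -/
def Lst (u : StoneCech ℕ) (s t : unitInterval) : Set (Su u) :=
  closure (⋃ r ∈ Set.Ioo s t, Pset u s r)

/-- The interior of `B` in the subspace `A`, viewed as a subset of the ambient space. -/
def relInt {Y : Type*} [TopologicalSpace Y] (A B : Set Y) : Set Y :=
  Subtype.val '' interior ((Subtype.val : A → Y) ⁻¹' B)

/-- The transfinite sequence `X_α ⊆ S_u`: `X_0 = S_u`,
`X_{α+1} = X_α \ ⋃_{t} Int_{X_α}(X_α ∩ f_u⁻¹(t))`, and `X_λ = ⋂_{β<λ} X_β` at limits. -/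
def Xseq (u : StoneCech ℕ) : Ordinal → Set (Su u) := fun α =>
  Ordinal.limitRecOn α Set.univ
    (fun _ Xa => Xa \ ⋃ t : unitInterval, relInt Xa (Xa ∩ fu u ⁻¹' {t}))
    (fun o _ ih => ⋂ (β : {β : Ordinal // β < o}), ih β.1 β.2)

/-- The bottom line `B_u = S_u ∩ cl_{β𝐒}(ℕ × I × {0})`, viewed as a subset of `S_u`. -/
def Bu (u : StoneCech ℕ) : Set (Su u) :=
  Subtype.val ⁻¹' closure (stoneCechUnit '' {p : bS | p.2.2 = 0})

/-- The top line `T_u = S_u ∩ cl_{β𝐒}(ℕ × I × {1})`, viewed as a subset of `S_u`. -/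
def Tu (u : StoneCech ℕ) : Set (Su u) :=
  Subtype.val ⁻¹' closure (stoneCechUnit '' {p : bS | p.2.2 = 1})

section AuxConn


variable {Y : Type*} [TopologicalSpace Y]

lemma isConnected_iInter_directed {ι : Type*} [Nonempty ι] [T2Space Y]
    {K : ι → Set Y} (hd : Directed (· ⊇ ·) K)
    (hK : ∀ i, IsCompact (K i)) (hKc : ∀ i, IsConnected (K i)) :
    IsConnected (⋂ i, K i) := by
  have hcl : ∀ i, IsClosed (K i) := fun i => (hK i).isClosed
  have hXcl : IsClosed (⋂ i, K i) := isClosed_iInter hcl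
  have hXne : (⋂ i, K i).Nonempty :=
    IsCompact.nonempty_iInter_of_directed_nonempty_isCompact_isClosed K hd
      (fun i => (hKc i).nonempty) hK hcl
  refine ⟨hXne, fun U V hU hV hsub hUne hVne => ?_⟩
  by_contra hUV
  rw [not_nonempty_iff_eq_empty] at hUV
  set X := ⋂ i, K i with hX
  have hXsub : ∀ i, X ⊆ K i := fun i => iInter_subset K i
  have hAeq : X ∩ U = X \ V := by
    apply Subset.antisymm
    · rintro x ⟨hx1, hx2⟩
      refine ⟨hx1, fun hxV => ?_⟩
      have : x ∈ X ∩ (U ∩ V) := ⟨hx1, hx2, hxV⟩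
      simp [hUV] at this
    · rintro x ⟨hx1, hx2⟩
      rcases hsub hx1 with h | h
      · exact ⟨hx1, h⟩
      · exact absurd h hx2
  have hBeq : X ∩ V = X \ U := by
    apply Subset.antisymm
    · rintro x ⟨hx1, hx2⟩
      refine ⟨hx1, fun hxU => ?_⟩
      have : x ∈ X ∩ (U ∩ V) := ⟨hx1, hxU, hx2⟩
      simp [hUV] at this
    · rintro x ⟨hx1, hx2⟩
      rcases hsub hx1 with h | h
      · exact absurd h hx2
      · exact ⟨hx1, h⟩
  have hAcl : IsClosed (X ∩ U) := hAeq ▸ hXcl.sdiff hV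
  have hBcl : IsClosed (X ∩ V) := hBeq ▸ hXcl.sdiff hU
  obtain ⟨i₀⟩ := ‹Nonempty ι›
  have hAcomp : IsCompact (X ∩ U) :=
    (hK i₀).of_isClosed_subset hAcl (inter_subset_left.trans (hXsub i₀))
  have hBcomp : IsCompact (X ∩ V) :=
    (hK i₀).of_isClosed_subset hBcl (inter_subset_left.trans (hXsub i₀))
  have hdisj : Disjoint (X ∩ U) (X ∩ V) := by
    rw [disjoint_iff_inter_eq_empty, ← hUV]
    ext x
    constructor
    · rintro ⟨⟨h1, h2⟩, ⟨_, h3⟩⟩; exact ⟨h1, h2, h3⟩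
    · rintro ⟨h1, h2, h3⟩; exact ⟨⟨h1, h2⟩, ⟨h1, h3⟩⟩
  obtain ⟨U', V', hU', hV', hAU', hBV', hdUV⟩ :=
    SeparatedNhds.of_isCompact_isCompact hAcomp hBcomp hdisj
  have h2 : ∃ i, K i \ (U' ∪ V') = ∅ := by
    by_contra h
    push_neg at h
    have hne' : ∀ i, (K i \ (U' ∪ V')).Nonempty := h
    obtain ⟨x, hx⟩ := IsCompact.nonempty_iInter_of_directed_nonempty_isCompact_isClosed
      (fun i => K i \ (U' ∪ V'))
      (fun i j => by
        obtain ⟨k, hki, hkj⟩ := hd i j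
        exact ⟨k, diff_subset_diff_left hki, diff_subset_diff_left hkj⟩)
      hne' (fun i => (hK i).diff (hU'.union hV'))
      (fun i => (hcl i).sdiff (hU'.union hV'))
    have hxX : x ∈ X := mem_iInter.mpr fun i => (mem_iInter.mp hx i).1
    have hxW : x ∉ U' ∪ V' := (mem_iInter.mp hx i₀).2
    rcases hsub hxX with h' | h'
    · exact hxW (Or.inl (hAU' ⟨hxX, h'⟩))
    · exact hxW (Or.inr (hBV' ⟨hxX, h'⟩))
  obtain ⟨i, hi⟩ := h2
  have h3 := (hKc i).isPreconnected U' V' hU' hV' (diff_eq_empty.mp hi)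
    (hUne.mono fun x hx => ⟨hXsub i hx.1, hAU' hx⟩)
    (hVne.mono fun x hx => ⟨hXsub i hx.1, hBV' hx⟩)
  rw [disjoint_iff_inter_eq_empty.mp hdUV, inter_empty] at h3
  exact h3.ne_empty rfl

lemma key_layer {Y : Type*} [TopologicalSpace Y] [CompactSpace Y] [T2Space Y]
    {g : Y → unitInterval} (hg : Continuous g) {P : unitInterval → unitInterval → Set Y}
    (hPconn : ∀ s r : unitInterval, s < r → IsConnected (P s r))
    (hPmono : ∀ ⦃s s' r r' : unitInterval⦄, s' ≤ s → r ≤ r' → P s r ⊆ P s' r')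
    (hPval : ∀ s r : unitInterval, P s r ⊆ g ⁻¹' (Icc s r))
    (hPmem : ∀ (w : Y) (s r : unitInterval), s < g w → g w < r → w ∈ P s r)
    (t : unitInterval) (ht : 0 < t) :
    IsConnected (g ⁻¹' {t} ∩ closure (g ⁻¹' (Iio t))) := by
  set L : unitInterval → Set Y := fun s => closure (⋃ r ∈ Ioo s t, P s r) with hLdef
  have hLconn : ∀ s : unitInterval, s < t → IsConnected (L s) := by
    intro s hs
    obtain ⟨r₀, hr₀⟩ := exists_between hs
    refine IsConnected.closure ⟨?_, ?_⟩
    · obtain ⟨x, hx⟩ := (hPconn s r₀ hr₀.1).nonempty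
      exact ⟨x, mem_biUnion hr₀ hx⟩
    · rw [show (⋃ r ∈ Ioo s t, P s r) = ⋃₀ (P s '' Ioo s t) by rw [sUnion_image]]
      apply IsPreconnected.sUnion_directed
      · rintro _ ⟨r1, hr1, rfl⟩ _ ⟨r2, hr2, rfl⟩
        exact ⟨P s (max r1 r2), ⟨max r1 r2, ⟨lt_max_of_lt_left hr1.1, max_lt hr1.2 hr2.2⟩, rfl⟩,
          hPmono le_rfl (le_max_left _ _), hPmono le_rfl (le_max_right _ _)⟩
      · rintro _ ⟨r, hr, rfl⟩
        exact (hPconn s r hr.1).isPreconnected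
  have hLIcc : ∀ s : unitInterval, L s ⊆ g ⁻¹' (Icc s t) := by
    intro s
    apply closure_minimal _ (isClosed_Icc.preimage hg)
    intro x hx
    obtain ⟨r, hr, hxr⟩ := mem_iUnion₂.mp hx
    obtain ⟨h1, h2⟩ := hPval s r hxr
    exact ⟨h1, h2.trans hr.2.le⟩
  have hLcl : ∀ s : unitInterval, s < t → L s ⊆ closure (g ⁻¹' (Iio t)) := by
    intro s hs
    apply closure_mono
    intro x hx
    obtain ⟨r, hr, hxr⟩ := mem_iUnion₂.mp hx
    exact lt_of_le_of_lt (hPval s r hxr).2 hr.2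
  have hLanti : ∀ ⦃s s' : unitInterval⦄, s ≤ s' → L s' ⊆ L s := by
    intro s s' h
    apply closure_mono
    intro x hx
    obtain ⟨r, hr, hxr⟩ := mem_iUnion₂.mp hx
    exact mem_biUnion ⟨lt_of_le_of_lt h hr.1, hr.2⟩ (hPmono h le_rfl hxr)
  have hmain : g ⁻¹' {t} ∩ closure (g ⁻¹' (Iio t)) = ⋂ s : {s : unitInterval // s < t}, L s.1 := by
    ext z
    constructor
    · rintro ⟨hz1, hz2⟩
      have hzt : g z = t := hz1
      refine mem_iInter.mpr fun s => ?_
      obtain ⟨s₁, hs₁, hs₁t⟩ := exists_between s.2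
      have hsplit : g ⁻¹' (Iio t) ⊆ g ⁻¹' (Iic s₁) ∪ g ⁻¹' (Ioo s₁ t) := by
        intro x hx
        rcases le_or_gt (g x) s₁ with h | h
        · exact Or.inl h
        · exact Or.inr ⟨h, hx⟩
      have h1 : z ∈ closure (g ⁻¹' (Iic s₁)) ∪ closure (g ⁻¹' (Ioo s₁ t)) := by
        have := closure_mono hsplit hz2
        rwa [closure_union] at this
      have h2 : z ∈ closure (g ⁻¹' (Ioo s₁ t)) := by
        rcases h1 with h | h
        · have hle : g z ≤ s₁ := (isClosed_Iic.preimage hg).closure_subset h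
          rw [hzt] at hle
          exact absurd hle (not_le.mpr hs₁t)
        · exact h
      refine closure_mono ?_ h2
      intro w hw
      obtain ⟨r, hr1, hr2⟩ := exists_between hw.2
      exact mem_biUnion ⟨lt_trans hs₁ (lt_trans hw.1 hr1), hr2⟩
        (hPmem w s.1 r (lt_trans hs₁ hw.1) hr1)
    · intro hz
      have hz' : ∀ s : {s : unitInterval // s < t}, z ∈ L s.1 := mem_iInter.mp hz
      have hle : g z ≤ t := (hLIcc 0 (hz' ⟨0, ht⟩)).2
      have hge : t ≤ g z := by
        by_contra h
        push_neg at h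
        obtain ⟨s, hs1, hs2⟩ := exists_between h
        exact absurd (hLIcc s (hz' ⟨s, hs2⟩)).1 (not_le.mpr hs1)
      exact ⟨le_antisymm hle hge, hLcl 0 ht (hz' ⟨0, ht⟩)⟩
  rw [hmain]
  haveI : Nonempty {s : unitInterval // s < t} := ⟨⟨0, ht⟩⟩
  refine isConnected_iInter_directed ?_ (fun s => isClosed_closure.isCompact)
    (fun s => hLconn s.1 s.2)
  intro i j
  exact ⟨⟨max i.1 j.1, max_lt i.2 j.2⟩, hLanti (le_max_left _ _), hLanti (le_max_right _ _)⟩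

end AuxConn

lemma continuous_betaF : Continuous betaF := by
  unfold betaF; exact continuous_stoneCechExtend _

lemma continuous_fu (u : StoneCech ℕ) : Continuous (fu u) := by
  unfold fu; exact continuous_betaF.comp continuous_subtype_val

lemma betaF_unit (p : bS) : betaF (stoneCechUnit p) = p.2.1 :=
  congrFun (stoneCechExtend_extends (continuous_fst.comp continuous_snd)) p

lemma betaF_mem_of_mem_closure {C : Set unitInterval} (hC : IsClosed C)
    {z : StoneCech bS} (hz : z ∈ closure (stoneCechUnit '' {p : bS | p.2.1 ∈ C})) :
    betaF z ∈ C := by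
  refine closure_minimal ?_ (hC.preimage continuous_betaF) hz
  rintro _ ⟨p, hp, rfl⟩
  rw [mem_preimage, betaF_unit]
  exact hp

lemma closure_image_split {X A B : Set bS} (h : X ⊆ A ∪ B) {z : StoneCech bS}
    (hz : z ∈ closure (stoneCechUnit '' X)) :
    z ∈ closure (stoneCechUnit '' A) ∪ closure (stoneCechUnit '' B) := by
  have h1 : stoneCechUnit '' X ⊆ stoneCechUnit '' A ∪ stoneCechUnit '' B := by
    rw [← image_union]; exact image_mono h
  have := closure_mono h1 hz
  rwa [closure_union] at this

lemma mem_Pset_of_lt_lt (u : StoneCech ℕ) (w : Su u) (s r : unitInterval)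
    (h1 : s < fu u w) (h2 : fu u w < r) : w ∈ Pset u s r := by
  obtain ⟨s', hs1, hs2⟩ := exists_between h1
  have hwuniv : w.1 ∈ closure (stoneCechUnit '' (univ : Set bS)) := by
    rw [image_univ, denseRange_stoneCechUnit.closure_range]; trivial
  have hsplit1 := closure_image_split (A := {p : bS | p.2.1 ∈ Iic s'})
      (B := {p : bS | p.2.1 ∈ Ici s'}) (fun p _ => le_total p.2.1 s') hwuniv
  have hw1 : w.1 ∈ closure (stoneCechUnit '' {p : bS | p.2.1 ∈ Ici s'}) := by
    rcases hsplit1 with h | h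
    · exact absurd (betaF_mem_of_mem_closure isClosed_Iic h) (not_le.mpr hs2)
    · exact h
  have hsub2 : {p : bS | p.2.1 ∈ Ici s'} ⊆ {p : bS | p.2.1 ∈ Icc s' r} ∪ {p : bS | p.2.1 ∈ Ici r} := by
    intro p hp
    rcases le_total p.2.1 r with h | h
    · exact Or.inl ⟨hp, h⟩
    · exact Or.inr h
  have hsplit2 := closure_image_split hsub2 hw1
  have hw2 : w.1 ∈ closure (stoneCechUnit '' {p : bS | p.2.1 ∈ Icc s' r}) := by
    rcases hsplit2 with h | h
    · exact h
    · exact absurd (betaF_mem_of_mem_closure isClosed_Ici h) (not_le.mpr h2)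
  show w.1 ∈ closure (stoneCechUnit '' {p : bS | p.2.1 ∈ Icc s r})
  have hsub3 : {p : bS | p.2.1 ∈ Icc s' r} ⊆ {p : bS | p.2.1 ∈ Icc s r} := by
    intro p hp
    exact ⟨le_trans hs1.le hp.1, hp.2⟩
  exact closure_mono (image_mono hsub3) hw2

lemma Pset_subset_preimage (u : StoneCech ℕ) (s r : unitInterval) :
    Pset u s r ⊆ fu u ⁻¹' (Icc s r) := fun _ hw =>
  betaF_mem_of_mem_closure isClosed_Icc hw

lemma Pset_mono (u : StoneCech ℕ) ⦃s s' r r' : unitInterval⦄ (h1 : s' ≤ s) (h2 : r ≤ r') :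
    Pset u s r ⊆ Pset u s' r' := by
  intro w hw
  show w.1 ∈ closure (stoneCechUnit '' {p : bS | p.2.1 ∈ Icc s' r'})
  have hsub : {p : bS | p.2.1 ∈ Icc s r} ⊆ {p : bS | p.2.1 ∈ Icc s' r'} := by
    intro p hp
    exact ⟨le_trans h1 hp.1, le_trans hp.2 h2⟩
  exact closure_mono (image_mono hsub) hw

/-- For every `t ∈ (0,1]` the set `L_t` is connected, and for every `t ∈ [0,1)` the
set `R_t` is connected. -/
lemma symm_lt_iff_left {a b : unitInterval} :
    unitInterval.symm a < b ↔ unitInterval.symm b < a := by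
  constructor <;> intro h
  · rw [← unitInterval.symm_symm a]
    exact unitInterval.symm_lt_symm.mpr h
  · rw [← unitInterval.symm_symm b]
    exact unitInterval.symm_lt_symm.mpr h

lemma lt_symm_iff_left {a b : unitInterval} :
    a < unitInterval.symm b ↔ b < unitInterval.symm a := by
  constructor <;> intro h
  · rw [← unitInterval.symm_symm b]
    exact unitInterval.symm_lt_symm.mpr h
  · rw [← unitInterval.symm_symm a]
    exact unitInterval.symm_lt_symm.mpr h

theorem Lset_Rset_isConnected (u : StoneCech ℕ)
    (hu : ∀ n : ℕ, u ≠ stoneCechUnit n)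
    (hne : (Su u).Nonempty) (hcomp : IsCompact (Su u)) (hconn : IsConnected (Su u))
    (hFsp : IsFSpace (Su u))
    (hP : ∀ s r : unitInterval, s < r → IsConnected (Pset u s r)) :
    (∀ t : unitInterval, 0 < t → IsConnected (Lset u t)) ∧
    (∀ t : unitInterval, t < 1 → IsConnected (Rset u t)) := by
  haveI : CompactSpace (Su u) := isCompact_iff_compactSpace.mp hcomp
  have hfu : Continuous (fu u) := continuous_fu u
  constructor
  · intro t ht
    have h := key_layer hfu (P := Pset u) hP (Pset_mono u) (Pset_subset_preimage u)
      (fun w s r => mem_Pset_of_lt_lt u w s r) t ht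
    have hIco : (Ico (0 : unitInterval) t : Set unitInterval) = Iio t := by
      ext x
      exact ⟨fun hx => hx.2, fun hx => ⟨unitInterval.nonneg', hx⟩⟩
    show IsConnected (fu u ⁻¹' {t} ∩ closure (fu u ⁻¹' (Ico 0 t)))
    rw [hIco]
    exact h
  · intro t ht
    have hg : Continuous (fun z => unitInterval.symm (fu u z)) :=
      unitInterval.continuous_symm.comp hfu
    have hPconn' : ∀ s r : unitInterval, s < r →
        IsConnected (Pset u (unitInterval.symm r) (unitInterval.symm s)) :=
      fun s r hsr => hP _ _ (unitInterval.symm_lt_symm.mpr hsr)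
    have hPmono' : ∀ ⦃s s' r r' : unitInterval⦄, s' ≤ s → r ≤ r' →
        Pset u (unitInterval.symm r) (unitInterval.symm s)
          ⊆ Pset u (unitInterval.symm r') (unitInterval.symm s') :=
      fun s s' r r' h1 h2 =>
        Pset_mono u (unitInterval.symm_le_symm.mpr h2) (unitInterval.symm_le_symm.mpr h1)
    have hPval' : ∀ s r : unitInterval,
        Pset u (unitInterval.symm r) (unitInterval.symm s)
          ⊆ (fun z => unitInterval.symm (fu u z)) ⁻¹' Icc s r := by
      intro s r w hw
      obtain ⟨ha, hb⟩ := Pset_subset_preimage u (unitInterval.symm r) (unitInterval.symm s) hw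
      constructor
      · rw [← unitInterval.symm_symm s]
        exact unitInterval.symm_le_symm.mpr hb
      · rw [show r = unitInterval.symm (unitInterval.symm r) from (unitInterval.symm_symm r).symm]
        exact unitInterval.symm_le_symm.mpr ha
    have hPmem' : ∀ (w : Su u) (s r : unitInterval), s < unitInterval.symm (fu u w) →
        unitInterval.symm (fu u w) < r →
        w ∈ Pset u (unitInterval.symm r) (unitInterval.symm s) := by
      intro w s r h1 h2
      exact mem_Pset_of_lt_lt u w _ _ (symm_lt_iff_left.mp h2) (lt_symm_iff_left.mp h1)
    have ht' : 0 < unitInterval.symm t := by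
      rw [← unitInterval.symm_one]
      exact unitInterval.symm_lt_symm.mpr ht
    have h := key_layer hg (P := fun s r => Pset u (unitInterval.symm r) (unitInterval.symm s))
      hPconn' hPmono' hPval' hPmem' (unitInterval.symm t) ht'
    have e1 : (fun z => unitInterval.symm (fu u z)) ⁻¹' {unitInterval.symm t}
        = fu u ⁻¹' {t} := by
      ext z
      simp only [mem_preimage, mem_singleton_iff]
      exact unitInterval.symm_inj
    have e2 : (fun z => unitInterval.symm (fu u z)) ⁻¹' (Iio (unitInterval.symm t))
        = fu u ⁻¹' (Ioc t 1) := by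
      ext z
      simp only [mem_preimage, mem_Iio, mem_Ioc]
      constructor
      · intro hz
        exact ⟨unitInterval.symm_lt_symm.mp hz, unitInterval.le_one'⟩
      · intro hz
        exact unitInterval.symm_lt_symm.mpr hz.1
    show IsConnected (fu u ⁻¹' {t} ∩ closure (fu u ⁻¹' (Ioc t 1)))
    rw [← e1, ← e2]
    exact h

end
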